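/- Suppose α_{ij} ≥ 0 and the TIN-optimality condition α_{ii} ≥ max_{j≠i} α_{ji} + max_{k≠i} α_{ik} holds for all i. If (d_1,...,d_K) lies in the polyhedral TIN region (0 ≤ d_i ≤ α_{ii} and all cycle bounds hold), then there exist r_1,...,r_K ≤ 0 achieving exactly d_i = α_{ii} + r_i − max{0, max_{j≠i}(α_{ij} + r_j)} for all i; in particular max{0, α_{ii} + r_i − max{0, max_{j≠i}(α_{ij}+r_j)}} = α_{ii} + r_i − max{0, max_{j≠i}(α_{ij}+r_j)}, so the polyhedral relaxation is tight and the TIN region equals the polyhedral TIN region. -/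

import Mathlib

/-- Cyclic predecessor in `Fin m`. -/
def cprev {m : ℕ} (j : Fin m) : Fin m := ⟨(j.1 + m - 1) % m, Nat.mod_lt _ j.pos⟩

/-- The TIN-optimality condition. -/
noncomputable def TINopt (K : ℕ) (α : Fin K → Fin K → ℝ) : Prop :=
  ∀ i, (⨆ j : {j : Fin K // j ≠ i}, α j.1 i) + (⨆ k : {k : Fin K // k ≠ i}, α i k.1)
    ≤ α i i

namespace Stmt18Aux

variable {K : ℕ} (α : Fin K → Fin K → ℝ) (d : Fin K → ℝ)

/-- Sum of interference coefficients along consecutive pairs of a list. -/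
def edgeSum : List (Fin K) → ℝ
  | [] => 0
  | [_] => 0
  | a :: b :: t => α a b + edgeSum (b :: t)

lemma edgeSum_cons (a : Fin K) (l : List (Fin K)) (h : l ≠ []) :
    edgeSum α (a :: l) = α a (l.head h) + edgeSum α l := by
  cases l with
  | nil => exact absurd rfl h
  | cons b s => rfl

lemma edgeSum_append : ∀ (A : List (Fin K)) (hA : A ≠ []) (B : List (Fin K)) (hB : B ≠ []),
    edgeSum α (A ++ B) = edgeSum α A + α (A.getLast hA) (B.head hB) + edgeSum α B
  | [a], _, B, hB => by
      simp [edgeSum_cons α a B hB, edgeSum]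
  | a :: a' :: T, _, B, hB => by
      have IH := edgeSum_append (a' :: T) (by simp) B hB
      have h1 : (a :: a' :: T) ++ B = a :: a' :: (T ++ B) := by simp
      rw [h1]
      show α a a' + edgeSum α (a' :: (T ++ B)) = _
      have h2 : (a :: a' :: T).getLast (by simp) = (a' :: T).getLast (by simp) :=
        List.getLast_cons _
      rw [show a' :: (T ++ B) = (a' :: T) ++ B from rfl, IH, h2]
      show _ = α a a' + edgeSum α (a' :: T) + _ + _
      ring

/-- Value of a walk. -/
noncomputable def W (l : List (Fin K)) : ℝ :=
  (l.map (fun x => d x - α x x)).sum + edgeSum α l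

lemma W_single (i : Fin K) : W α d [i] = d i - α i i := by
  simp [W, edgeSum]

lemma W_append (A B : List (Fin K)) (hA : A ≠ []) (hB : B ≠ []) :
    W α d (A ++ B) = W α d A + α (A.getLast hA) (B.head hB) + W α d B := by
  unfold W
  rw [List.map_append, List.sum_append, edgeSum_append α A hA B hB]
  ring

lemma W_cons (i : Fin K) (l : List (Fin K)) (h : l ≠ []) :
    W α d (i :: l) = (d i - α i i) + α i (l.head h) + W α d l := by
  have := W_append α d [i] l (by simp) h
  simpa [W_single] using this

lemma sum_map_get (f : Fin K → ℝ) : ∀ (l : List (Fin K)),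
    ∑ j : Fin l.length, f (l.get j) = (l.map f).sum
  | [] => by simp
  | a :: t => by
      show ∑ j : Fin (t.length + 1), f ((a :: t).get j) = (List.map f (a :: t)).sum
      rw [Fin.sum_univ_succ]
      simp only [List.get_cons_succ']
      rw [sum_map_get f t]
      simp

lemma sum_edges : ∀ (a : Fin K) (t : List (Fin K)),
    ∑ j : Fin t.length, α ((a :: t).get j.castSucc) ((a :: t).get j.succ)
      = edgeSum α (a :: t)
  | a, [] => by simp [edgeSum]
  | a, b :: s => by
      show ∑ j : Fin (s.length + 1), α ((a :: b :: s).get j.castSucc) ((a :: b :: s).get j.succ)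
        = edgeSum α (a :: b :: s)
      rw [Fin.sum_univ_succ]
      have h0 : α ((a :: b :: s).get (0 : Fin (s.length + 1)).castSucc)
          ((a :: b :: s).get (0 : Fin (s.length + 1)).succ) = α a b := rfl
      rw [h0]
      have hrest : ∀ j : Fin s.length,
          α ((a :: b :: s).get j.succ.castSucc) ((a :: b :: s).get j.succ.succ)
            = α ((b :: s).get j.castSucc) ((b :: s).get j.succ) := fun j => rfl
      rw [Finset.sum_congr rfl (fun j _ => hrest j), sum_edges b s]
      rfl

lemma sum_cprev : ∀ (l : List (Fin K)) (hne : l ≠ []),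
    ∑ j : Fin l.length, α (l.get (cprev j)) (l.get j)
      = edgeSum α l + α (l.getLast hne) (l.head hne)
  | [], hne => absurd rfl hne
  | a :: t, hne' => by
      show ∑ j : Fin (t.length + 1), α ((a :: t).get (cprev j)) ((a :: t).get j)
        = edgeSum α (a :: t) + α ((a :: t).getLast hne') ((a :: t).head hne')
      rw [Fin.sum_univ_succ]
      have hc0 : cprev (0 : Fin (t.length + 1)) = ⟨t.length, Nat.lt_succ_self _⟩ := by
        apply Fin.ext
        show (0 + (t.length + 1) - 1) % (t.length + 1) = t.length
        simp [Nat.mod_eq_of_lt]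
      have hlast : (a :: t).get ⟨t.length, Nat.lt_succ_self _⟩
          = (a :: t).getLast (by simp) := by
        rw [List.getLast_eq_getElem]
        rfl
      have h0 : α ((a :: t).get (cprev (0 : Fin (t.length + 1))))
          ((a :: t).get (0 : Fin (t.length + 1)))
          = α ((a :: t).getLast (by simp)) ((a :: t).head (by simp)) := by
        rw [hc0, hlast]; rfl
      have hcs : ∀ j : Fin t.length, cprev j.succ = j.castSucc := by
        intro j
        apply Fin.ext
        show (j.1 + 1 + (t.length + 1) - 1) % (t.length + 1) = j.1
        have : j.1 + 1 + (t.length + 1) - 1 = j.1 + (t.length + 1) := by omega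
        rw [this, Nat.add_mod_right, Nat.mod_eq_of_lt (lt_trans j.2 (Nat.lt_succ_self _))]
      have hrest : ∀ j : Fin t.length,
          α ((a :: t).get (cprev j.succ)) ((a :: t).get j.succ)
            = α ((a :: t).get j.castSucc) ((a :: t).get j.succ) := by
        intro j; rw [hcs j]
      rw [h0, Finset.sum_congr rfl (fun j _ => hrest j), sum_edges α a t]
      ring

/-- The cycle inequality in list form. -/
lemma cycle_ineq
    (hcyc : ∀ m : ℕ, 2 ≤ m → ∀ i : Fin m → Fin K, Function.Injective i →
      ∑ j : Fin m, d (i j) ≤ ∑ j : Fin m, (α (i j) (i j) - α (i (cprev j)) (i j)))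
    (l : List (Fin K)) (hnd : l.Nodup) (hne : l ≠ []) (h2 : 2 ≤ l.length) :
    W α d l + α (l.getLast hne) (l.head hne) ≤ 0 := by
  have hinj : Function.Injective l.get := List.nodup_iff_injective_get.mp hnd
  have H := hcyc l.length h2 l.get hinj
  rw [Finset.sum_sub_distrib] at H
  have e1 : ∑ j : Fin l.length, d (l.get j) = (l.map d).sum := sum_map_get d l
  have e2 : ∑ j : Fin l.length, α (l.get j) (l.get j)
      = (l.map (fun x => α x x)).sum := sum_map_get (fun x => α x x) l
  have e3 := sum_cprev α l hne
  have e4 : (l.map (fun x => d x - α x x)).sum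
      = (l.map d).sum - (l.map (fun x => α x x)).sum := by
    rw [← sum_map_get (fun x => d x - α x x) l, ← e1, ← e2, ← Finset.sum_sub_distrib]
  unfold W
  rw [e4]
  rw [e1, e2, e3] at H
  linarith

/-- Value of a nodup path is nonpositive. -/
lemma path_nonpos (hα : ∀ i j, 0 ≤ α i j) (hd : ∀ i, 0 ≤ d i ∧ d i ≤ α i i)
    (hcyc : ∀ m : ℕ, 2 ≤ m → ∀ i : Fin m → Fin K, Function.Injective i →
      ∑ j : Fin m, d (i j) ≤ ∑ j : Fin m, (α (i j) (i j) - α (i (cprev j)) (i j)))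
    (l : List (Fin K)) (hnd : l.Nodup) (hne : l ≠ []) : W α d l ≤ 0 := by
  match l, hne with
  | [a], _ => rw [W_single]; linarith [(hd a).2]
  | a :: b :: t, _ =>
      have h2 : 2 ≤ (a :: b :: t).length := by simp
      have := cycle_ineq α d hcyc (a :: b :: t) hnd (by simp) h2
      have hα' := hα ((a :: b :: t).getLast (by simp)) ((a :: b :: t).head (by simp))
      linarith

end Stmt18Aux

open Stmt18Aux in
theorem stmt_18 (K : ℕ) (hK : 1 ≤ K) (α : Fin K → Fin K → ℝ)
    (hα : ∀ i j, 0 ≤ α i j) (hcond : TINopt K α)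
    (d : Fin K → ℝ) (hd : ∀ i, 0 ≤ d i ∧ d i ≤ α i i)
    (hcyc : ∀ m : ℕ, 2 ≤ m → ∀ i : Fin m → Fin K, Function.Injective i →
      ∑ j : Fin m, d (i j) ≤ ∑ j : Fin m, (α (i j) (i j) - α (i (cprev j)) (i j))) :
    ∃ r : Fin K → ℝ, (∀ i, r i ≤ 0) ∧
      ∀ i, d i = α i i + r i -
          max 0 (⨆ j : {j : Fin K // j ≠ i}, (α i j.1 + r j.1)) ∧
        max 0 (α i i + r i - max 0 (⨆ j : {j : Fin K // j ≠ i}, (α i j.1 + r j.1)))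
          = α i i + r i - max 0 (⨆ j : {j : Fin K // j ≠ i}, (α i j.1 + r j.1)) := by
  classical
  -- the set of path values starting at i
  set P : Fin K → Set ℝ :=
    fun i => (W α d) '' {l : List (Fin K) | l.Nodup ∧ l.head? = some i} with hP
  have hmem_single : ∀ i, (d i - α i i) ∈ P i := by
    intro i
    exact ⟨[i], ⟨List.nodup_singleton i, rfl⟩, W_single α d i⟩
  have hne : ∀ i, (P i).Nonempty := fun i => ⟨_, hmem_single i⟩
  have hnonpos : ∀ i, ∀ x ∈ P i, x ≤ 0 := by
    rintro i x ⟨l, ⟨hnd, hhd⟩, rfl⟩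
    have hlne : l ≠ [] := by
      intro h; rw [h] at hhd; simp at hhd
    exact path_nonpos α d hα hd hcyc l hnd hlne
  have hbdd : ∀ i, BddAbove (P i) := fun i => ⟨0, fun x hx => hnonpos i x hx⟩
  set r : Fin K → ℝ := fun i => sSup (P i) with hr
  have hr0 : ∀ i, r i ≤ 0 := fun i => Real.sSup_le (hnonpos i) le_rfl
  -- (a)
  have ha : ∀ i, d i - α i i ≤ r i := fun i => le_csSup (hbdd i) (hmem_single i)
  -- key: W (i :: l) ≤ r i for nodup path l starting at j ≠ i
  have hkey : ∀ i j (l : List (Fin K)), j ≠ i → l.Nodup → l.head? = some j →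
      W α d (i :: l) ≤ r i := by
    intro i j l hji hnd hhd
    have hlne : l ≠ [] := by intro h; rw [h] at hhd; simp at hhd
    by_cases hi : i ∈ l
    · -- splice: l = Q ++ i :: S
      obtain ⟨Q, S, rfl⟩ := List.append_of_mem hi
      have hQne : Q ≠ [] := by
        intro h; subst h
        simp at hhd
        exact hji hhd.symm
      rw [List.nodup_append] at hnd
      obtain ⟨hQnd, hiSnd, hdisj⟩ := hnd
      have hiQ : i ∉ Q := fun h => hdisj i h i (List.mem_cons_self (a := i) (l := S)) rfl
      have hiQnd : (i :: Q).Nodup := List.nodup_cons.mpr ⟨hiQ, hQnd⟩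
      have hWiS : W α d (i :: S) ≤ r i :=
        le_csSup (hbdd i) ⟨i :: S, ⟨hiSnd, rfl⟩, rfl⟩
      have hsplit : (i :: (Q ++ i :: S)) = (i :: Q) ++ (i :: S) := by simp
      rw [hsplit, W_append α d (i :: Q) (i :: S) (by simp) (by simp)]
      have hcyc' := cycle_ineq α d hcyc (i :: Q) hiQnd (by simp)
        (by simpa using Nat.succ_le_succ (List.length_pos_iff.mpr hQne))
      have hhead : (i :: Q).head (by simp) = i := rfl
      have hheadS : (i :: S).head (by simp) = i := rfl
      rw [hhead] at hcyc'
      rw [hheadS]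
      linarith
    · have hnd' : (i :: l).Nodup := List.nodup_cons.mpr ⟨hi, hnd⟩
      exact le_csSup (hbdd i) ⟨i :: l, ⟨hnd', rfl⟩, rfl⟩
  -- (b)
  have hb : ∀ i (j : Fin K), j ≠ i → (d i - α i i) + α i j + r j ≤ r i := by
    intro i j hji
    have : r j ≤ r i - ((d i - α i i) + α i j) := by
      apply csSup_le (hne j)
      rintro x ⟨l, ⟨hnd, hhd⟩, rfl⟩
      have hlne : l ≠ [] := by intro h; rw [h] at hhd; simp at hhd
      have hhead : l.head hlne = j := by
        rw [List.head?_eq_head hlne] at hhd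
        exact Option.some_injective _ hhd
      have := hkey i j l hji hnd hhd
      rw [W_cons α d i l hlne, hhead] at this
      linarith
    linarith
  refine ⟨r, hr0, fun i => ?_⟩
  set S : ℝ := ⨆ j : {j : Fin K // j ≠ i}, (α i j.1 + r j.1) with hS
  have hbddS : BddAbove (Set.range fun j : {j : Fin K // j ≠ i} => α i j.1 + r j.1) :=
    Set.Finite.bddAbove (Set.finite_range _)
  -- (c): r i ≤ d i - α i i + max 0 S
  have hc : r i ≤ d i - α i i + max 0 S := by
    apply csSup_le (hne i)
    rintro x ⟨l, ⟨hnd, hhd⟩, rfl⟩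
    match l, hhd with
    | [a], hhd =>
        have : a = i := by simpa using hhd
        subst this
        rw [W_single]
        have : (0:ℝ) ≤ max 0 S := le_max_left _ _
        linarith
    | a :: b :: t, hhd =>
        have hai : a = i := by simpa using hhd
        subst hai
        rw [List.nodup_cons] at hnd
        have hbi : b ≠ a := by
          intro h; exact hnd.1 (h ▸ List.mem_cons_self (a := b) (l := t))
        have hWbt : W α d (b :: t) ≤ r b :=
          le_csSup (hbdd b) ⟨b :: t, ⟨hnd.2, rfl⟩, rfl⟩
        have hle : α a b + r b ≤ S := le_ciSup hbddS ⟨b, hbi⟩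
        have hSmax : S ≤ max 0 S := le_max_right _ _
        rw [W_cons α d a (b :: t) (by simp)]
        have hhead : (b :: t).head (by simp) = b := rfl
        rw [hhead]
        linarith
  -- reverse inequality : d i - α i i + max 0 S ≤ r i
  have hrev : d i - α i i + max 0 S ≤ r i := by
    have h1 : max 0 S ≤ r i - (d i - α i i) := by
      apply max_le
      · linarith [ha i]
      · rcases isEmpty_or_nonempty {j : Fin K // j ≠ i} with hE | hNE
        · rw [hS, Real.iSup_of_isEmpty]
          linarith [ha i]
        · apply ciSup_le
          rintro ⟨j, hj⟩
          have := hb i j hj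
          linarith
    linarith
  have heq : d i = α i i + r i - max 0 S := by linarith
  refine ⟨heq, ?_⟩
  rw [← heq]
  exact max_eq_right (hd i).1
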